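/- Let α > -1, let n ≥ 1 be an integer, let μ, η ∈ ℂ with |μ| = |η| = 1, let a, c ∈ ℂ and b ∈ 𝔻, and suppose φ : 𝔻 → 𝔻 is the analytic self-map given by φ(z) = b + cz/(1 - ηbz) and ψ(z) = a·z^n / (1 - ηbz)^{n+α+2} for z ∈ 𝔻. Then for all z, w ∈ 𝔻, μ·p·ψ(z)·(ηw)^n / (1 - ηw·φ(z))^{n+α+2} = μ·p·ψ(w)·(ηz)^n / (1 - η·φ(w)·z)^{n+α+2}; in fact both sides equal a·μ·p·(η z w)^n / (1 - ηbz - ηbw + η²b²zw - ηczw)^{n+α+2}. -/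

import Mathlib

open ComplexConjugate

lemma aux_mul_cpow_re_pos {u v : ℂ} (hu : 0 < u.re) (hv : 0 < v.re) (s : ℂ) :
    (u * v) ^ s = u ^ s * v ^ s := by
  have hu0 : u ≠ 0 := fun h => by simp [h] at hu
  have hv0 : v ≠ 0 := fun h => by simp [h] at hv
  have hau := abs_lt.mp (Complex.abs_arg_lt_pi_div_two_iff.mpr (Or.inl hu))
  have hav := abs_lt.mp (Complex.abs_arg_lt_pi_div_two_iff.mpr (Or.inl hv))
  have hpi := Real.pi_pos
  have hlog : Complex.log (u * v) = Complex.log u + Complex.log v :=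
    Complex.log_mul hu0 hv0 ⟨by linarith [hau.1, hav.1], by linarith [hau.2, hav.2]⟩
  rw [Complex.cpow_def_of_ne_zero (mul_ne_zero hu0 hv0), Complex.cpow_def_of_ne_zero hu0,
    Complex.cpow_def_of_ne_zero hv0, hlog, add_mul, Complex.exp_add]

lemma aux_re_pos_of_abs_lt_one {x : ℂ} (hx : ‖x‖ < 1) : 0 < (1 - x).re := by
  have := Complex.re_le_norm x
  simp only [Complex.sub_re, Complex.one_re]
  linarith

/-- Theorem 2.1 (converse direction): for symbols `ψ, φ` of the stated form, the
reproducing-kernel identity for complex symmetry with conjugation `C_{μ,η}` holds,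
and both sides have the indicated common value. -/
theorem stmt1 (α : ℝ) (hα : -1 < α) (n : ℕ) (hn : 1 ≤ n) (μ η a c b : ℂ)
    (hμ : ‖μ‖ = 1) (hη : ‖η‖ = 1)
    (hb : b ∈ Metric.ball (0 : ℂ) 1)
    (φ ψ : ℂ → ℂ)
    (hφdef : ∀ z ∈ Metric.ball (0 : ℂ) 1, φ z = b + c * z / (1 - η * b * z))
    (hφmap : ∀ z ∈ Metric.ball (0 : ℂ) 1, φ z ∈ Metric.ball (0 : ℂ) 1)
    (hψdef : ∀ z ∈ Metric.ball (0 : ℂ) 1,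
      ψ z = a * z ^ n / (1 - η * b * z) ^ ((n : ℂ) + α + 2))
    (p : ℂ) (hp : p = ∏ j ∈ Finset.range n, ((α : ℂ) + 2 + j)) :
    ∀ z ∈ Metric.ball (0 : ℂ) 1, ∀ w ∈ Metric.ball (0 : ℂ) 1,
      μ * p * ψ z * (η * w) ^ n / (1 - η * w * φ z) ^ ((n : ℂ) + α + 2)
        = μ * p * ψ w * (η * z) ^ n / (1 - η * φ w * z) ^ ((n : ℂ) + α + 2) ∧
      μ * p * ψ z * (η * w) ^ n / (1 - η * w * φ z) ^ ((n : ℂ) + α + 2)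
        = a * μ * p * (η * z * w) ^ n /
            (1 - η * b * z - η * b * w + η ^ 2 * b ^ 2 * z * w - η * c * z * w) ^
              ((n : ℂ) + α + 2) := by
  set s : ℂ := (n : ℂ) + α + 2 with hs
  simp only [Metric.mem_ball, dist_zero_right] at hb hφmap hφdef hψdef ⊢
  -- main computation
  have main : ∀ z, ‖z‖ < 1 → ∀ w, ‖w‖ < 1 →
      μ * p * ψ z * (η * w) ^ n / (1 - η * w * φ z) ^ s
        = a * μ * p * (η * z * w) ^ n /
            (1 - η * b * z - η * b * w + η ^ 2 * b ^ 2 * z * w - η * c * z * w) ^ s := by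
    intro z hz w hw
    have hu : 0 < (1 - η * b * z).re := by
      apply aux_re_pos_of_abs_lt_one
      rw [norm_mul, norm_mul, hη, one_mul]
      calc ‖b‖ * ‖z‖ ≤ ‖b‖ * 1 :=
            mul_le_mul_of_nonneg_left hz.le (norm_nonneg b)
        _ < 1 := by simpa using hb
    have hv : 0 < (1 - η * w * φ z).re := by
      apply aux_re_pos_of_abs_lt_one
      rw [norm_mul, norm_mul, hη, one_mul]
      calc ‖w‖ * ‖φ z‖ ≤ 1 * ‖φ z‖ :=
            mul_le_mul_of_nonneg_right hw.le (norm_nonneg _)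
        _ < 1 := by simpa using hφmap z hz
    have hu0 : (1 - η * b * z) ≠ 0 := fun h => by simp [h] at hu
    have key : (1 - η * b * z) * (1 - η * w * φ z)
        = 1 - η * b * z - η * b * w + η ^ 2 * b ^ 2 * z * w - η * c * z * w := by
      rw [hφdef z hz]
      field_simp
      ring
    have hus0 : (1 - η * b * z) ^ s ≠ 0 := by
      simp [Complex.cpow_eq_zero_iff, hu0]
    have hvs0 : (1 - η * w * φ z) ^ s ≠ 0 := by
      simp only [Ne, Complex.cpow_eq_zero_iff, not_and_or, not_not]
      left
      exact fun h => by simp [h] at hv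
    rw [hψdef z hz, ← key, aux_mul_cpow_re_pos hu hv]
    have hnum : a * z ^ n * (η * w) ^ n = a * (η * z * w) ^ n := by
      rw [show η * z * w = z * (η * w) by ring, mul_pow]; ring
    field_simp
    linear_combination (μ * p * (1 - η * b * z) ^ s * (1 - η * w * φ z) ^ s) * hnum
  intro z hz w hw
  refine ⟨?_, main z hz w hw⟩
  rw [main z hz w hw, show η * φ w * z = η * z * φ w by ring, main w hw z hz]
  ring_nf
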